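/- arXiv:1111.6830 — 3 statements merged into one kernel-verified Lean document; each statement's English description precedes it below -/
import Mathlib

section
/- Let n and s be coprime integers with 1 ≤ s < n, and let I ⊆ {1, ..., n} be an (n,s)-admissible subset with elements i_1 < i_2 < ... < i_s. Then i_1 = 1, and for every j with 2 ≤ j ≤ s one has i_j ≤ ⌈(j−1)·n/s⌉. -/
/-- Let `n` and `s` be coprime with `1 ≤ s < n` and let `I ⊆ {1, …, n}` be an
`(n,s)`-admissible subset (i.e. `|I| = s` and `n * |I ∩ {1, …, m}| > s * m` for all
`1 ≤ m < n`), with elements `i_1 < ⋯ < i_s`.  Then `i_1 = 1` and for every `j` with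
`2 ≤ j ≤ s` one has `i_j ≤ ⌈(j-1) * n / s⌉` (ceiling of the rational number `(j-1)n/s`).
(Below the `0`-based index `j : Fin s` with `1 ≤ j` corresponds to `i_{j+1}`.) -/
theorem admissible_increment_upper_bound (n s : ℕ) (hs : 1 ≤ s) (hsn : s < n)
    (hcop : Nat.Coprime n s)
    (I : Finset ℕ) (hI : I ⊆ Finset.Icc 1 n) (hcard : I.card = s)
    (hadm : ∀ m, 1 ≤ m → m < n → s * m < n * (I ∩ Finset.Icc 1 m).card) :
    I.orderEmbOfFin hcard ⟨0, hs⟩ = 1 ∧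
      ∀ j : Fin s, 1 ≤ (j : ℕ) →
        (I.orderEmbOfFin hcard j : ℤ) ≤ ⌈(((j : ℕ) : ℚ) * n / s)⌉ := by
  set e := I.orderEmbOfFin hcard with he
  have hmem : ∀ j : Fin s, e j ∈ I := fun j => I.orderEmbOfFin_mem hcard j
  have hone : ∀ j : Fin s, 1 ≤ e j := fun j => (Finset.mem_Icc.mp (hI (hmem j))).1
  have hlen : ∀ j : Fin s, e j ≤ n := fun j => (Finset.mem_Icc.mp (hI (hmem j))).2
  -- key counting lemma
  have hcount : ∀ j : Fin s, (I ∩ Finset.Icc 1 (e j - 1)).card = (j : ℕ) := by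
    intro j
    have hset : I ∩ Finset.Icc 1 (e j - 1) = (Finset.Iio j).image e := by
      ext x
      simp only [Finset.mem_inter, Finset.mem_Icc, Finset.mem_image, Finset.mem_Iio]
      constructor
      · rintro ⟨hxI, hx1, hxm⟩
        have : x ∈ Set.range e := by rw [Finset.range_orderEmbOfFin]; exact hxI
        obtain ⟨k, hk⟩ := this
        refine ⟨k, ?_, hk⟩
        have hxlt : x < e j := lt_of_le_of_lt hxm (Nat.sub_lt (hone j) one_pos)
        rw [← hk] at hxlt
        exact (OrderEmbedding.lt_iff_lt e).mp hxlt
      · rintro ⟨k, hk, rfl⟩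
        refine ⟨hmem k, hone k, ?_⟩
        have : e k < e j := (OrderEmbedding.lt_iff_lt e).mpr hk
        omega
    rw [hset, Finset.card_image_of_injective _ e.injective, Fin.card_Iio]
  have h1 : e ⟨0, hs⟩ = 1 := by
    by_contra h
    have h2 : 2 ≤ e ⟨0, hs⟩ := by
      have := hone ⟨0, hs⟩; omega
    have hm := hadm (e ⟨0, hs⟩ - 1) (by omega) (by have := hlen ⟨0, hs⟩; omega)
    rw [hcount ⟨0, hs⟩] at hm
    simp at hm
  refine ⟨h1, fun j hj => ?_⟩
  have hlt : e ⟨0, hs⟩ < e j := by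
    apply (OrderEmbedding.lt_iff_lt e).mpr
    exact Fin.mk_lt_of_lt_val (by omega)
  have h2 : 2 ≤ e j := by omega
  have hm := hadm (e j - 1) (by omega) (by have := hlen j; omega)
  rw [hcount j] at hm
  -- s * (e j - 1) < n * j
  have key : (s : ℚ) * ((e j : ℚ) - 1) < (n : ℚ) * (j : ℕ) := by
    have : (s : ℚ) * ((e j : ℚ) - 1) = ((s * (e j - 1) : ℕ) : ℚ) := by
      push_cast; rw [Nat.cast_sub (by omega : 1 ≤ e j)]; push_cast; ring
    rw [this]
    exact_mod_cast hm
  have hsq : (0 : ℚ) < s := by exact_mod_cast hs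
  have hlt' : ((e j : ℚ) - 1) < ((j : ℕ) : ℚ) * n / s := by
    rw [lt_div_iff₀ hsq]
    nlinarith [key]
  have : ((e j : ℤ) - 1 : ℤ) < ⌈(((j : ℕ) : ℚ) * n / s)⌉ := by
    have : (((e j : ℤ) - 1 : ℤ) : ℚ) < ((⌈(((j : ℕ) : ℚ) * n / s)⌉ : ℤ) : ℚ) := by
      calc (((e j : ℤ) - 1 : ℤ) : ℚ) = (e j : ℚ) - 1 := by push_cast; ring
        _ < ((j : ℕ) : ℚ) * n / s := hlt'
        _ ≤ _ := Int.le_ceil _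
    exact_mod_cast this
  omega
end

section
/- Let n ≥ 3 be an odd integer. Then the (n,2)-admissible subsets of {1, ..., n} are exactly the sets {1, i} with 2 ≤ i ≤ (n+1)/2. Consequently, for every positive real number q, Σ_{I (n,2)-admissible} q^{(Σ_{i∈I} i) − 3} = 1 + q + q^2 + ... + q^{⌊n/2⌋ − 1}. -/
open scoped Classical

/-- A subset `I ⊆ {1, …, n}` is `(n,s)`-admissible if `|I| = s` and for every `m` with
`1 ≤ m < n` one has `n * |I ∩ {1, …, m}| > s * m`. -/
def IsAdmissible (n s : ℕ) (I : Finset ℕ) : Prop :=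
  I ⊆ Finset.Icc 1 n ∧ I.card = s ∧
    ∀ m, 1 ≤ m → m < n → s * m < n * (I ∩ Finset.Icc 1 m).card

theorem admissible_char (n : ℕ) (hn : 3 ≤ n) (hodd : Odd n) (I : Finset ℕ) :
    IsAdmissible n 2 I ↔ ∃ i, 2 ≤ i ∧ i ≤ (n + 1) / 2 ∧ I = {1, i} := by
  obtain ⟨k, hk⟩ := hodd
  constructor
  · rintro ⟨hsub, hcard, hcond⟩
    obtain ⟨a, b, hab, rfl⟩ := Finset.card_eq_two.mp hcard
    have h1 := hcond 1 le_rfl (by omega)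
    have hmem : (1 : ℕ) ∈ ({a, b} : Finset ℕ) := by
      have hne : (({a, b} : Finset ℕ) ∩ Finset.Icc 1 1).Nonempty := by
        rw [← Finset.card_pos]; by_contra h; push_neg at h
        interval_cases h' : (({a, b} : Finset ℕ) ∩ Finset.Icc 1 1).card
        · omega
      obtain ⟨x, hx⟩ := hne
      simp only [Finset.mem_inter, Finset.mem_Icc] at hx
      obtain ⟨hx1, hx2, hx3⟩ := hx
      have : x = 1 := le_antisymm hx3 hx2
      rwa [this] at hx1
    have key : ∀ i : ℕ, i ≠ 1 → ({a, b} : Finset ℕ) = {1, i} → i ∈ Finset.Icc 1 n →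
        ∃ j, 2 ≤ j ∧ j ≤ (n + 1) / 2 ∧ ({a, b} : Finset ℕ) = {1, j} := by
      intro i hi hIi hiIcc
      simp only [Finset.mem_Icc] at hiIcc
      have hi2 : 2 ≤ i := by omega
      have h2 := hcond (i - 1) (by omega) (by omega)
      have hinter : ({a, b} : Finset ℕ) ∩ Finset.Icc 1 (i - 1) = {1} := by
        rw [hIi]; ext x
        simp only [Finset.mem_inter, Finset.mem_insert, Finset.mem_singleton, Finset.mem_Icc]
        omega
      rw [hinter] at h2
      simp only [Finset.card_singleton, mul_one] at h2
      exact ⟨i, hi2, by omega, hIi⟩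
    simp only [Finset.mem_insert, Finset.mem_singleton] at hmem
    rcases hmem with rfl | rfl
    · exact key b (by omega) rfl (hsub (by simp))
    · refine key a (by omega) ?_ (hsub (by simp))
      ext x; simp only [Finset.mem_insert, Finset.mem_singleton]; tauto
  · rintro ⟨i, hi2, hile, rfl⟩
    have hin : i ≤ n := by omega
    refine ⟨?_, ?_, ?_⟩
    · intro x hx
      simp only [Finset.mem_insert, Finset.mem_singleton] at hx
      simp only [Finset.mem_Icc]; omega
    · rw [Finset.card_insert_of_notMem (by simp; omega), Finset.card_singleton]
    · intro m hm1 hmn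
      by_cases hmi : m < i
      · have : ({1, i} : Finset ℕ) ∩ Finset.Icc 1 m = {1} := by
          ext x
          simp only [Finset.mem_inter, Finset.mem_insert, Finset.mem_singleton, Finset.mem_Icc]
          omega
        rw [this]; simp only [Finset.card_singleton, mul_one]; omega
      · have : ({1, i} : Finset ℕ) ∩ Finset.Icc 1 m = {1, i} := by
          ext x
          simp only [Finset.mem_inter, Finset.mem_insert, Finset.mem_singleton, Finset.mem_Icc]
          omega
        rw [this, Finset.card_insert_of_notMem (by simp; omega), Finset.card_singleton]
        omega

/-- Let `n ≥ 3` be odd.  The `(n,2)`-admissible subsets of `{1, …, n}` are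
exactly the sets `{1, i}` with `2 ≤ i ≤ (n+1)/2`.  Consequently, for every positive real `q`,
`∑_{I (n,2)-admissible} q^{(∑_{i ∈ I} i) - 3} = 1 + q + q² + ⋯ + q^{⌊n/2⌋ - 1}`. -/
theorem admissible_signature_two (n : ℕ) (hn : 3 ≤ n) (hodd : Odd n)
    (q : ℝ) (hq : 0 < q) :
    (∀ I : Finset ℕ, IsAdmissible n 2 I ↔ ∃ i, 2 ≤ i ∧ i ≤ (n + 1) / 2 ∧ I = {1, i}) ∧
    ∑ I ∈ (Finset.Icc 1 n).powerset.filter (IsAdmissible n 2),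
        q ^ ((∑ i ∈ I, i) - 3) = ∑ t ∈ Finset.range (n / 2), q ^ t := by
  refine ⟨admissible_char n hn hodd, ?_⟩
  have hset : (Finset.Icc 1 n).powerset.filter (IsAdmissible n 2)
      = (Finset.Icc 2 ((n + 1) / 2)).image (fun i => ({1, i} : Finset ℕ)) := by
    ext I
    simp only [Finset.mem_filter, Finset.mem_powerset, Finset.mem_image, Finset.mem_Icc]
    rw [admissible_char n hn hodd]
    constructor
    · rintro ⟨_, i, h1, h2, rfl⟩; exact ⟨i, ⟨h1, h2⟩, rfl⟩
    · rintro ⟨i, ⟨h1, h2⟩, rfl⟩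
      refine ⟨?_, i, h1, h2, rfl⟩
      intro x hx
      simp only [Finset.mem_insert, Finset.mem_singleton] at hx
      simp only [Finset.mem_Icc]; omega
  rw [hset, Finset.sum_image]
  · obtain ⟨k, hk⟩ := hodd
    have h1 : (n + 1) / 2 = k + 1 := by omega
    have h2 : n / 2 = k := by omega
    rw [h1, h2]
    rw [show Finset.Icc 2 (k + 1) = (Finset.range k).image (fun t => t + 2) by
      ext x; simp only [Finset.mem_image, Finset.mem_Icc, Finset.mem_range]
      constructor
      · rintro ⟨a, b⟩; exact ⟨x - 2, by omega, by omega⟩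
      · rintro ⟨t, ht, rfl⟩; omega]
    rw [Finset.sum_image (by intro a _ b _ h; simp only at h; omega)]
    apply Finset.sum_congr rfl
    intro t ht
    congr 1
    rw [Finset.sum_insert (by simp), Finset.sum_singleton]
    omega
  · intro a ha b hb h
    simp only [Finset.mem_coe, Finset.mem_Icc] at ha hb
    have h : ({1, a} : Finset ℕ) = {1, b} := h
    have : a ∈ ({1, b} : Finset ℕ) := by rw [← h]; simp
    simp only [Finset.mem_insert, Finset.mem_singleton] at this
    omega
end

section
/- Let n and s be coprime integers with 1 ≤ s < n. For every (n,s)-admissible subset I ⊆ {1, ..., n}, the integer e(I) := Σ_{i∈I} i − s(s+1)/2 is nonnegative. The polynomial P(T) := Σ_{I (n,s)-admissible} T^{e(I)} in ℤ[T] has constant term 1 and degree equal to 1 + Σ_{j=1}^{s−1} ⌈j·n/s⌉ − s(s+1)/2. -/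
open scoped Classical

private lemma tri_succ (k : ℕ) : (k+1)*(k+1+1)/2 = k*(k+1)/2 + (k+1) := by
  have h : (k+1)*(k+1+1) = k*(k+1) + 2*(k+1) := by ring
  rw [h]
  generalize k*(k+1) = a
  omega

private lemma minsum : ∀ (s : ℕ) (I : Finset ℕ), (0 ∉ I) → I.card = s →
    s*(s+1)/2 ≤ ∑ i ∈ I, i ∧ (∑ i ∈ I, i = s*(s+1)/2 → I = Finset.Icc 1 s) := by
  intro s
  induction s with
  | zero =>
    intro I h0 hc
    rw [Finset.card_eq_zero] at hc
    subst hc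
    simp
  | succ k ih =>
    intro I h0 hc
    have hne : I.Nonempty := Finset.card_pos.mp (by omega)
    set M := I.max' hne with hM
    have hMmem : M ∈ I := I.max'_mem hne
    have hsub : I ⊆ Finset.Icc 1 M := by
      intro i hi
      rw [Finset.mem_Icc]
      refine ⟨?_, I.le_max' i hi⟩
      rcases Nat.eq_zero_or_pos i with h | h
      · exact absurd (h ▸ hi) h0
      · exact h
    have hMge : k + 1 ≤ M := by
      have := Finset.card_le_card hsub
      rw [Nat.card_Icc] at this
      omega
    have hc' : (I.erase M).card = k := by
      rw [Finset.card_erase_of_mem hMmem]; omega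
    have h0' : 0 ∉ I.erase M := fun h => h0 (Finset.erase_subset _ _ h)
    obtain ⟨ihle, iheq⟩ := ih (I.erase M) h0' hc'
    have hsum : M + ∑ i ∈ I.erase M, i = ∑ i ∈ I, i :=
      Finset.add_sum_erase I (fun i => i) hMmem
    have htri := tri_succ k
    constructor
    · omega
    · intro heq
      have hM1 : M = k+1 := by omega
      have hs1 : ∑ i ∈ I.erase M, i = k*(k+1)/2 := by omega
      have hins : I = insert M (I.erase M) := (Finset.insert_erase hMmem).symm
      rw [hins, iheq hs1, hM1]
      ext x
      simp only [Finset.mem_insert, Finset.mem_Icc]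
      omega

private lemma sum_eq_telescope (n : ℕ) (I : Finset ℕ) (hI : I ⊆ Finset.Icc 1 n) :
    ∑ i ∈ I, i = ∑ m ∈ Finset.range n, (I.card - (I ∩ Finset.Icc 1 m).card) := by
  have h1 : ∀ m : ℕ, (I ∩ Finset.Icc 1 m).card + (I.filter (fun i => m < i)).card = I.card := by
    intro m
    have heq : I ∩ Finset.Icc 1 m = I.filter (fun i => ¬ m < i) := by
      ext i
      simp only [Finset.mem_inter, Finset.mem_filter, Finset.mem_Icc, not_lt]
      constructor
      · rintro ⟨hi, _, h2⟩; exact ⟨hi, h2⟩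
      · rintro ⟨hi, h2⟩
        have := hI hi
        rw [Finset.mem_Icc] at this
        exact ⟨hi, this.1, h2⟩
    rw [heq, Nat.add_comm]
    exact Finset.card_filter_add_card_filter_not _
  have h2 : ∑ m ∈ Finset.range n, (I.filter (fun i => m < i)).card = ∑ i ∈ I, i := by
    have hcf : ∀ m : ℕ, (I.filter (fun i => m < i)).card = ∑ i ∈ I, if m < i then 1 else 0 :=
      fun m => Finset.card_filter _ _
    simp_rw [hcf]
    rw [Finset.sum_comm]
    apply Finset.sum_congr rfl
    intro i hi
    have hin : i ∈ Finset.Icc 1 n := hI hi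
    rw [Finset.mem_Icc] at hin
    have hcf2 : ∑ m ∈ Finset.range n, (if m < i then 1 else 0) =
        ((Finset.range n).filter (fun m => m < i)).card := (Finset.card_filter _ _).symm
    rw [hcf2]
    have hr : (Finset.range n).filter (fun m => m < i) = Finset.range i := by
      ext m; simp only [Finset.mem_filter, Finset.mem_range]; omega
    rw [hr, Finset.card_range]
  calc ∑ i ∈ I, i = ∑ m ∈ Finset.range n, (I.filter (fun i => m < i)).card := h2.symm
    _ = ∑ m ∈ Finset.range n, (I.card - (I ∩ Finset.Icc 1 m).card) := by
        apply Finset.sum_congr rfl; intro m _; have := h1 m; omega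

private lemma ceil_eq_div_succ (a b : ℕ) (hb : 0 < b) (hnd : ¬ b ∣ a) :
    (⌈(a : ℚ) / b⌉).toNat = a / b + 1 := by
  have hmod : a % b ≠ 0 := fun h => hnd (Nat.dvd_of_mod_eq_zero h)
  have hdm := Nat.div_add_mod a b
  have hml := Nat.mod_lt a hb
  have h1 : a / b * b < a := by
    have := Nat.mul_comm b (a / b); omega
  have h2 : a ≤ (a / b + 1) * b := by
    have h3 : (a/b+1)*b = b*(a/b) + b := by ring
    omega
  have hbq : (0:ℚ) < (b:ℚ) := by exact_mod_cast hb
  have key1 : (((a / b : ℕ) : ℚ)) < (a:ℚ) / (b:ℚ) := by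
    rw [lt_div_iff₀ hbq]
    exact_mod_cast h1
  have key2 : (a:ℚ) / (b:ℚ) ≤ ((a / b : ℕ) : ℚ) + 1 := by
    rw [div_le_iff₀ hbq]
    calc (a:ℚ) ≤ (((a/b+1) * b : ℕ) : ℚ) := by exact_mod_cast h2
      _ = (((a/b : ℕ) : ℚ) + 1) * (b : ℚ) := by push_cast; ring
  have hc : ⌈(a : ℚ) / b⌉ = ((a / b : ℕ) : ℤ) + 1 := by
    rw [Int.ceil_eq_iff]
    constructor
    · rw [Int.cast_add, Int.cast_one, add_sub_cancel_right, Int.cast_natCast]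
      exact key1
    · push_cast
      exact key2
  rw [hc]
  have : (0:ℤ) ≤ ((a / b : ℕ) : ℤ) := Int.natCast_nonneg _
  omega

private lemma strictMono_step (n s : ℕ) (hs : 0 < s) (hsn : s < n) :
    StrictMono (fun j => j * n / s + 1) := by
  apply strictMono_nat_of_lt_succ
  intro j
  show j * n / s + 1 < (j+1) * n / s + 1
  have e1 : (j*n + s)/s = j*n/s + 1 := Nat.add_div_right _ hs
  have e2 : j*n + s ≤ (j+1)*n := by
    have h3 : (j+1)*n = j*n+n := by ring
    omega
  have e3 := Nat.div_le_div_right (c := s) e2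
  omega

private lemma image_inter_card (n s m : ℕ) (hs : 0 < s) (hsn : s < n) (hm : 1 ≤ m) :
    (((Finset.range s).image (fun j => j * n / s + 1)) ∩ Finset.Icc 1 m).card
      = min s ((s * m - 1) / n + 1) := by
  set q := (s * m - 1) / n + 1 with hq
  have hsm : 1 ≤ s * m := Nat.mul_pos hs (by omega)
  have hiff : ∀ j : ℕ, (j * n / s + 1 ≤ m ↔ j < q) := by
    intro j
    have h2 : j * n / s < m ↔ j * n < m * s := Nat.div_lt_iff_lt_mul hs
    have h2' : m * s = s * m := Nat.mul_comm m s
    have h3 : j ≤ (s*m-1)/n ↔ j * n ≤ s*m - 1 := Nat.le_div_iff_mul_le (by omega)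
    omega
  have hinter : ((Finset.range s).image (fun j => j * n / s + 1)) ∩ Finset.Icc 1 m
      = (Finset.range (min s q)).image (fun j => j * n / s + 1) := by
    ext x
    simp only [Finset.mem_inter, Finset.mem_image, Finset.mem_Icc, Finset.mem_range]
    constructor
    · rintro ⟨⟨j, hj, rfl⟩, _, hle⟩
      exact ⟨j, lt_min hj ((hiff j).1 hle), rfl⟩
    · rintro ⟨j, hj, rfl⟩
      exact ⟨⟨j, lt_of_lt_of_le hj (min_le_left _ _), rfl⟩,
        Nat.succ_le_succ (Nat.zero_le _),
        (hiff j).2 (lt_of_lt_of_le hj (min_le_right _ _))⟩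
  rw [hinter, Finset.card_image_of_injOn ((strictMono_step n s hs hsn).injective.injOn),
    Finset.card_range]

/-- Let `n` and `s` be coprime with `1 ≤ s < n`.  For every
`(n,s)`-admissible `I ⊆ {1, …, n}` the integer `e(I) = (∑ i ∈ I, i) - s(s+1)/2` is
nonnegative, and the polynomial `P(T) = ∑_{I admissible} T^{e(I)} ∈ ℤ[T]` has constant
term `1` and degree `1 + ∑_{j=1}^{s-1} ⌈j·n/s⌉ - s(s+1)/2`. -/
theorem kottwitz_polynomial_degree (n s : ℕ) (hs : 1 ≤ s) (hsn : s < n)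
    (hcop : Nat.Coprime n s) :
    (∀ I : Finset ℕ, IsAdmissible n s I → s * (s + 1) / 2 ≤ ∑ i ∈ I, i) ∧
    (∑ I ∈ (Finset.Icc 1 n).powerset.filter (IsAdmissible n s),
        (Polynomial.X : Polynomial ℤ) ^ ((∑ i ∈ I, i) - s * (s + 1) / 2)).coeff 0 = 1 ∧
    (∑ I ∈ (Finset.Icc 1 n).powerset.filter (IsAdmissible n s),
        (Polynomial.X : Polynomial ℤ) ^ ((∑ i ∈ I, i) - s * (s + 1) / 2)).natDegree =
      1 + (∑ j ∈ Finset.Icc 1 (s - 1), (⌈((j : ℚ) * n) / s⌉).toNat) - s * (s + 1) / 2 := by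
  have hs0 : 0 < s := hs
  have hn0 : 0 < n := by omega
  set Imax : Finset ℕ := (Finset.range s).image (fun j => j * n / s + 1) with hImaxdef
  have hmono := strictMono_step n s hs0 hsn
  have hImaxcard : Imax.card = s := by
    rw [hImaxdef, Finset.card_image_of_injOn hmono.injective.injOn, Finset.card_range]
  have hImaxsub : Imax ⊆ Finset.Icc 1 n := by
    intro x hx
    rw [hImaxdef] at hx
    simp only [Finset.mem_image, Finset.mem_range] at hx
    obtain ⟨j, hj, rfl⟩ := hx
    rw [Finset.mem_Icc]
    refine ⟨Nat.succ_le_succ (Nat.zero_le _), ?_⟩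
    have h1 : j * n < n * s := by
      calc j*n < s*n := by exact mul_lt_mul_of_pos_right hj (by omega)
        _ = n*s := Nat.mul_comm _ _
    have h2 : j * n / s < n := (Nat.div_lt_iff_lt_mul hs0).2 h1
    exact h2
  -- admissibility of Imax
  have hImaxadm : IsAdmissible n s Imax := by
    refine ⟨hImaxsub, hImaxcard, ?_⟩
    intro m hm1 hmn
    rw [hImaxdef, image_inter_card n s m hs0 hsn hm1]
    set q := (s * m - 1) / n + 1 with hq
    have hsm : 1 ≤ s * m := Nat.mul_pos hs0 (by omega)
    rcases le_or_gt q s with h | h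
    · rw [min_eq_right h]
      have hdm := Nat.div_add_mod (s*m-1) n
      have hml : (s*m-1) % n < n := Nat.mod_lt _ hn0
      have hnq : n * q = n * ((s*m-1)/n) + n := by rw [hq]; ring
      have hle : s*m ≤ n*q := by omega
      rcases lt_or_eq_of_le hle with h' | h'
      · exact h'
      · exfalso
        have hdvd : n ∣ s * m := ⟨q, h'⟩
        have := hcop.dvd_of_dvd_mul_left hdvd
        have := Nat.le_of_dvd (by omega) this
        omega
    · rw [min_eq_left (le_of_lt h)]
      have h1 : s*m < s*n := mul_lt_mul_of_pos_left hmn hs0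
      have h2 : s*n = n*s := Nat.mul_comm s n
      omega
  -- prefix counts of any admissible set dominate those of Imax
  have hcle : ∀ I : Finset ℕ, IsAdmissible n s I → ∀ m ∈ Finset.range n,
      (Imax ∩ Finset.Icc 1 m).card ≤ (I ∩ Finset.Icc 1 m).card := by
    intro I hI m hm
    rw [Finset.mem_range] at hm
    rcases Nat.eq_zero_or_pos m with rfl | hm1
    · have : Finset.Icc 1 0 = (∅ : Finset ℕ) := by simp
      simp [this]
    · rw [hImaxdef, image_inter_card n s m hs0 hsn hm1]
      have hadm := hI.2.2 m hm1 hm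
      have h1 : s*m/n < (I ∩ Finset.Icc 1 m).card := by
        by_contra hcon
        push_neg at hcon
        have h2 : n * (I ∩ Finset.Icc 1 m).card ≤ n * (s*m/n) :=
          Nat.mul_le_mul_left n hcon
        have h3 : (s*m/n)*n ≤ s*m := Nat.div_mul_le_self _ _
        have h4 : n * (s*m/n) = (s*m/n)*n := Nat.mul_comm _ _
        omega
      have h5 : (s*m-1)/n ≤ s*m/n := Nat.div_le_div_right (by omega)
      refine le_trans (min_le_right _ _) ?_
      omega
  -- sum over Imax
  have hSmax : ∑ i ∈ Imax, i = s + ∑ j ∈ Finset.range s, j*n/s := by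
    rw [hImaxdef, Finset.sum_image (fun x _ y _ h => hmono.injective h),
      Finset.sum_add_distrib, Finset.sum_const, Finset.card_range, smul_eq_mul, mul_one]
    omega
  -- upper bound on sums of admissible sets
  have hub : ∀ I : Finset ℕ, IsAdmissible n s I → ∑ i ∈ I, i ≤ ∑ i ∈ Imax, i := by
    intro I hI
    rw [sum_eq_telescope n I hI.1, sum_eq_telescope n Imax hImaxsub]
    apply Finset.sum_le_sum
    intro m hm
    rw [hI.2.1, hImaxcard]
    have := hcle I hI m hm
    omega
  -- part 1
  have part1 : ∀ I : Finset ℕ, IsAdmissible n s I → s * (s + 1) / 2 ≤ ∑ i ∈ I, i := by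
    intro I hI
    have h0 : 0 ∉ I := by
      intro h
      have := hI.1 h
      rw [Finset.mem_Icc] at this
      omega
    exact (minsum s I h0 hI.2.1).1
  -- sum of Icc 1 s
  have hIccsum : ∑ i ∈ Finset.Icc 1 s, i = s*(s+1)/2 := by
    have h1 : Finset.range (s+1) = insert 0 (Finset.Icc 1 s) := by
      ext x; simp only [Finset.mem_range, Finset.mem_insert, Finset.mem_Icc]; omega
    have h2 := Finset.sum_range_id_mul_two (s+1)
    rw [h1, Finset.sum_insert (by simp)] at h2
    have h3 : (s+1)*(s+1-1) = s*(s+1) := by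
      rw [Nat.add_sub_cancel]; ring
    omega
  -- Icc 1 s is admissible
  have hIccadm : IsAdmissible n s (Finset.Icc 1 s) := by
    refine ⟨Finset.Icc_subset_Icc_right (le_of_lt hsn), by rw [Nat.card_Icc]; omega, ?_⟩
    intro m hm1 hmn
    have hint : Finset.Icc 1 s ∩ Finset.Icc 1 m = Finset.Icc 1 (min s m) := by
      ext x
      simp only [Finset.mem_inter, Finset.mem_Icc, le_min_iff]
      omega
    rw [hint, Nat.card_Icc]
    rcases le_or_gt m s with h | h
    · rw [min_eq_right h]
      have h1 : m*s < m*n := mul_lt_mul_of_pos_left hsn (by omega)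
      have e1 : m+1-1 = m := by omega
      rw [e1]
      have h2 : s*m = m*s := Nat.mul_comm _ _
      have h3 : m*n = n*m := Nat.mul_comm _ _
      omega
    · rw [min_eq_left (le_of_lt h)]
      have h1 : s*m < s*n := mul_lt_mul_of_pos_left hmn hs0
      have e1 : s+1-1 = s := by omega
      rw [e1]
      have h2 : s*n = n*s := Nat.mul_comm _ _
      omega
  -- membership facts
  have hImaxmem : Imax ∈ (Finset.Icc 1 n).powerset.filter (IsAdmissible n s) := by
    rw [Finset.mem_filter, Finset.mem_powerset]
    exact ⟨hImaxsub, hImaxadm⟩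
  have hIccmem : Finset.Icc 1 s ∈ (Finset.Icc 1 n).powerset.filter (IsAdmissible n s) := by
    rw [Finset.mem_filter, Finset.mem_powerset]
    exact ⟨Finset.Icc_subset_Icc_right (le_of_lt hsn), hIccadm⟩
  -- ceiling computation
  have hceil : ∀ j ∈ Finset.Icc 1 (s-1), (⌈((j:ℚ) * n) / s⌉).toNat = j*n/s + 1 := by
    intro j hj
    rw [Finset.mem_Icc] at hj
    have hnd : ¬ s ∣ j*n := by
      intro h
      have hdj : s ∣ j := (hcop.symm).dvd_of_dvd_mul_right h
      have := Nat.le_of_dvd (by omega) hdj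
      omega
    have hcast : ((j:ℚ) * n) = ((j*n : ℕ) : ℚ) := by push_cast; ring
    rw [hcast]
    exact ceil_eq_div_succ (j*n) s hs0 hnd
  -- RHS arithmetic
  have hRHS : 1 + (∑ j ∈ Finset.Icc 1 (s-1), (⌈((j:ℚ) * n) / s⌉).toNat) = ∑ i ∈ Imax, i := by
    rw [Finset.sum_congr rfl hceil, Finset.sum_add_distrib, Finset.sum_const, Nat.card_Icc,
      smul_eq_mul, mul_one, hSmax]
    have hr : Finset.range s = insert 0 (Finset.Icc 1 (s-1)) := by
      ext x; simp only [Finset.mem_range, Finset.mem_insert, Finset.mem_Icc]; omega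
    rw [hr, Finset.sum_insert (by simp)]
    simp only [Nat.zero_mul, Nat.zero_div, Nat.zero_add]
    omega
  refine ⟨part1, ?_, ?_⟩
  · -- constant coefficient
    rw [Polynomial.finset_sum_coeff]
    simp_rw [Polynomial.coeff_X_pow]
    have hcongr : ∀ I ∈ (Finset.Icc 1 n).powerset.filter (IsAdmissible n s),
        (if (0:ℕ) = (∑ i ∈ I, i) - s * (s + 1) / 2 then (1:ℤ) else 0)
          = if Finset.Icc 1 s = I then 1 else 0 := by
      intro I hIf
      rw [Finset.mem_filter] at hIf
      have hadmI := hIf.2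
      have h0 : 0 ∉ I := by
        intro h
        have := hadmI.1 h
        rw [Finset.mem_Icc] at this
        omega
      have hiff : ((0:ℕ) = (∑ i ∈ I, i) - s * (s + 1) / 2) ↔ (Finset.Icc 1 s = I) := by
        constructor
        · intro h
          have hle := part1 I hadmI
          have heq : ∑ i ∈ I, i = s*(s+1)/2 := by omega
          exact ((minsum s I h0 hadmI.2.1).2 heq).symm
        · intro h
          rw [← h, hIccsum]
          omega
      exact if_congr hiff rfl rfl
    rw [Finset.sum_congr rfl hcongr, Finset.sum_ite_eq, if_pos hIccmem]
  · -- degree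
    set D := (∑ i ∈ Imax, i) - s * (s + 1) / 2 with hD
    have hle : (∑ I ∈ (Finset.Icc 1 n).powerset.filter (IsAdmissible n s),
        (Polynomial.X : Polynomial ℤ) ^ ((∑ i ∈ I, i) - s * (s + 1) / 2)).natDegree ≤ D := by
      apply Polynomial.natDegree_sum_le_of_forall_le
      intro I hIf
      rw [Finset.mem_filter] at hIf
      rw [Polynomial.natDegree_X_pow]
      exact Nat.sub_le_sub_right (hub I hIf.2) _
    have hcoeff : (∑ I ∈ (Finset.Icc 1 n).powerset.filter (IsAdmissible n s),
        (Polynomial.X : Polynomial ℤ) ^ ((∑ i ∈ I, i) - s * (s + 1) / 2)).coeff D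
        = ∑ I ∈ (Finset.Icc 1 n).powerset.filter (IsAdmissible n s),
          if D = (∑ i ∈ I, i) - s * (s + 1) / 2 then (1:ℤ) else 0 := by
      rw [Polynomial.finset_sum_coeff]
      simp_rw [Polynomial.coeff_X_pow]
    have hone : (1:ℤ) ≤ (∑ I ∈ (Finset.Icc 1 n).powerset.filter (IsAdmissible n s),
        (Polynomial.X : Polynomial ℤ) ^ ((∑ i ∈ I, i) - s * (s + 1) / 2)).coeff D := by
      rw [hcoeff]
      have := Finset.single_le_sum
        (f := fun I => if D = (∑ i ∈ I, i) - s * (s + 1) / 2 then (1:ℤ) else 0)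
        (fun i _ => by
          by_cases h : D = (∑ x ∈ i, x) - s * (s + 1) / 2 <;> simp [h]) hImaxmem
      refine le_trans ?_ this
      show (1:ℤ) ≤ if D = (∑ i ∈ Imax, i) - s * (s + 1) / 2 then 1 else 0
      rw [if_pos rfl]
    have hge : D ≤ (∑ I ∈ (Finset.Icc 1 n).powerset.filter (IsAdmissible n s),
        (Polynomial.X : Polynomial ℤ) ^ ((∑ i ∈ I, i) - s * (s + 1) / 2)).natDegree := by
      apply Polynomial.le_natDegree_of_ne_zero
      intro h
      rw [h] at hone
      norm_num at hone
    have hdeg : (∑ I ∈ (Finset.Icc 1 n).powerset.filter (IsAdmissible n s),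
        (Polynomial.X : Polynomial ℤ) ^ ((∑ i ∈ I, i) - s * (s + 1) / 2)).natDegree = D :=
      le_antisymm hle hge
    rw [hdeg, hD]
    omega
end
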